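/- Fix c ∈ (0,1) and set λ₋ = (1−√c)² and λ₊ = (1+√c)². For every x ∈ (λ₋, λ₊), the principal value integral PV ∫_{λ₋}^{λ₊} f_MP(t) / (t−x) dt, defined as the limit as ε → 0⁺ of ∫_{λ₋}^{x−ε} f_MP(t)/(t−x) dt + ∫_{x+ε}^{λ₊} f_MP(t)/(t−x) dt, exists and equals (1 − c − x) / (2cx). (This is the Hilbert transform Re[m̌_F(x)] of the Marčenko–Pastur law.) -/

import Mathlib

/-- The Marčenko–Pastur density: `f_MP c x = √((x-λ₋)(λ₊-x))/(2πcx)` on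
`(λ₋, λ₊)` and `0` otherwise, where `λ₋ = (1-√c)²`, `λ₊ = (1+√c)²`. -/
noncomputable def fMP (c x : ℝ) : ℝ :=
  if (1 - Real.sqrt c) ^ 2 < x ∧ x < (1 + Real.sqrt c) ^ 2 then
    Real.sqrt ((x - (1 - Real.sqrt c) ^ 2) * ((1 + Real.sqrt c) ^ 2 - x)) /
      (2 * Real.pi * c * x)
  else 0

open Real

set_option maxHeartbeats 1000000

noncomputable def auxG (s d r q x u : ℝ) : ℝ :=
  -x * Real.arcsin ((u - s)/d) + r * Real.log (u - x)
  - r * Real.log ((x - (s-d))*((s+d) - x) + (s-x)*(u-x)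
      + r * Real.sqrt ((u - (s-d))*((s+d) - u)))
  + q * Real.arcsin ((s*u - q^2)/(u*d))

lemma auxN_pos (s d r q x u : ℝ)
    (hd : 0 < d) (ha0 : 0 < s - d) (hax : s - d < x) (hxb : x < s + d)
    (hr0 : 0 ≤ r) (hau : s - d ≤ u) (hub : u ≤ s + d) :
    0 < (x - (s-d))*((s+d) - x) + (s-x)*(u-x) + r * Real.sqrt ((u - (s-d))*((s+d) - u)) := by
  have hnum : 0 < (x - (s-d))*((s+d) - x) + (s-x)*(u-x) := by
    nlinarith [mul_nonneg (show (0:ℝ) ≤ (s+d) - u by linarith) (show (0:ℝ) ≤ x - (s-d) by linarith),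
      mul_nonneg (show (0:ℝ) ≤ u - (s-d) by linarith) (show (0:ℝ) ≤ (s+d) - x by linarith),
      mul_pos (show (0:ℝ) < x - (s-d) by linarith) (show (0:ℝ) < (s+d) - x by linarith)]
  have := mul_nonneg hr0 (Real.sqrt_nonneg ((u - (s-d))*((s+d) - u)))
  linarith

lemma auxG_contOn (s d r q x : ℝ)
    (hd : 0 < d) (ha0 : 0 < s - d) (hax : s - d < x) (hxb : x < s + d)
    (hr0 : 0 ≤ r) :
    ContinuousOn (auxG s d r q x) {u : ℝ | (s - d ≤ u ∧ u ≤ s + d) ∧ u ≠ x} := by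
  unfold auxG
  have c1 : ContinuousOn (fun u : ℝ => Real.arcsin ((u - s)/d)) {u : ℝ | (s - d ≤ u ∧ u ≤ s + d) ∧ u ≠ x} :=
    (Real.continuous_arcsin.comp (by continuity)).continuousOn
  have c2 : ContinuousOn (fun u : ℝ => Real.log (u - x)) {u : ℝ | (s - d ≤ u ∧ u ≤ s + d) ∧ u ≠ x} := by
    apply ContinuousOn.log
    · exact (continuous_id.sub continuous_const).continuousOn
    · rintro u ⟨_, hux⟩; exact sub_ne_zero.2 hux
  have c3 : ContinuousOn (fun u : ℝ => Real.log ((x - (s-d))*((s+d) - x) + (s-x)*(u-x)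
      + r * Real.sqrt ((u - (s-d))*((s+d) - u)))) {u : ℝ | (s - d ≤ u ∧ u ≤ s + d) ∧ u ≠ x} := by
    apply ContinuousOn.log
    · apply Continuous.continuousOn; continuity
    · rintro u ⟨⟨h1, h2⟩, _⟩
      exact (auxN_pos s d r q x u hd ha0 hax hxb hr0 h1 h2).ne'
  have c4 : ContinuousOn (fun u : ℝ => Real.arcsin ((s*u - q^2)/(u*d))) {u : ℝ | (s - d ≤ u ∧ u ≤ s + d) ∧ u ≠ x} := by
    apply Real.continuous_arcsin.comp_continuousOn
    apply ContinuousOn.div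
    · exact (continuous_const.mul continuous_id |>.sub continuous_const).continuousOn
    · exact (continuous_id.mul continuous_const).continuousOn
    · rintro u ⟨⟨h1, _⟩, _⟩
      exact mul_ne_zero (by nlinarith) hd.ne'
  exact (((continuousOn_const.mul c1).add (continuousOn_const.mul c2)).sub
    (continuousOn_const.mul c3)).add (continuousOn_const.mul c4)

lemma auxG_at_a (s d r q x : ℝ)
    (hd : 0 < d) (ha0 : 0 < s - d) (hax : s - d < x) (hxb : x < s + d)
    (hr0 : 0 ≤ r) (hq0 : 0 < q) (hq2 : q^2 = (s-d)*(s+d)) :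
    auxG s d r q x (s-d) = x * (π/2) - r * Real.log d - q * (π/2) := by
  unfold auxG
  have e1 : (s - d - s)/d = -1 := by field_simp; ring
  have e2 : (s - d - (s-d)) * ((s+d) - (s-d)) = 0 := by ring
  have e3 : (x - (s-d))*((s+d) - x) + (s-x)*((s-d)-x) + r * Real.sqrt ((s - d - (s-d)) * ((s+d) - (s-d)))
      = (x - (s-d)) * d := by
    rw [e2, Real.sqrt_zero]; ring
  have e4 : (s*(s-d) - q^2)/((s-d)*d) = -1 := by
    rw [hq2]; field_simp; ring
  rw [e1, e3, e4, Real.arcsin_neg_one]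
  rw [show (s - d) - x = -(x - (s-d)) by ring, Real.log_neg_eq_log]
  rw [Real.log_mul (by linarith) hd.ne']
  ring

lemma auxG_at_b (s d r q x : ℝ)
    (hd : 0 < d) (ha0 : 0 < s - d) (hax : s - d < x) (hxb : x < s + d)
    (hr0 : 0 ≤ r) (hq0 : 0 < q) (hq2 : q^2 = (s-d)*(s+d)) :
    auxG s d r q x (s+d) = -(x * (π/2)) - r * Real.log d + q * (π/2) := by
  unfold auxG
  have e1 : (s + d - s)/d = 1 := by field_simp; ring
  have e3 : (x - (s-d))*((s+d) - x) + (s-x)*((s+d)-x) + r * Real.sqrt ((s + d - (s-d)) * ((s+d) - (s+d)))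
      = ((s+d) - x) * d := by
    rw [show ((s+d) - (s+d)) = (0:ℝ) by ring, mul_zero, Real.sqrt_zero]; ring
  have e4 : (s*(s+d) - q^2)/((s+d)*d) = 1 := by
    rw [hq2, div_eq_one_iff_eq (mul_ne_zero (by nlinarith : (s+d:ℝ) ≠ 0) hd.ne')]; ring
  rw [e1, e3, e4, Real.arcsin_one]
  rw [Real.log_mul (by linarith) hd.ne']
  ring

lemma aux_hasDerivAt (s d r q x t : ℝ)
    (hd : 0 < d) (ha0 : 0 < s - d) (hax : s - d < x) (hxb : x < s + d)
    (hr : r = Real.sqrt ((x - (s-d)) * ((s+d) - x)) )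
    (hq0 : 0 < q) (hq2 : q^2 = (s-d)*(s+d))
    (hat : s - d < t) (htb : t < s + d) (htx : t ≠ x) :
    HasDerivAt (fun u : ℝ =>
      -x * Real.arcsin ((u - s)/d) + r * Real.log (u - x)
      - r * Real.log ((x - (s-d))*((s+d) - x) + (s-x)*(u-x)
          + r * Real.sqrt ((u - (s-d))*((s+d) - u)))
      + q * Real.arcsin ((s*u - q^2)/(u*d)))
    (x * Real.sqrt ((t - (s-d))*((s+d) - t)) / (t * (t - x))) t := by
  set a := s - d with hadef
  set b := s + d with hbdef
  have hq2' : q^2 = s^2 - d^2 := by rw [hq2, hadef, hbdef]; ring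
  have hRt : 0 < (t - a)*(b - t) := mul_pos (by linarith) (by linarith)
  set w := Real.sqrt ((t - a)*(b - t)) with hwdef
  have hw : 0 < w := Real.sqrt_pos.2 hRt
  have hw2 : w^2 = (t - a)*(b - t) := Real.sq_sqrt hRt.le
  have hw2' : w^2 = d^2 - (t-s)^2 := by rw [hw2, hadef, hbdef]; ring
  have hRx : 0 < (x - a)*(b - x) := mul_pos (by linarith) (by linarith)
  have hr0 : 0 < r := hr ▸ Real.sqrt_pos.2 hRx
  have hr2 : r^2 = (x - a)*(b - x) := hr ▸ Real.sq_sqrt hRx.le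
  have hr2' : r^2 = d^2 - (x-s)^2 := by rw [hr2, hadef, hbdef]; ring
  have ht0 : 0 < t := by linarith
  have hx0 : 0 < x := by linarith
  have htx' : t - x ≠ 0 := sub_ne_zero.2 htx
  -- piece 1 : arcsin ((u-s)/d)
  have h1 : HasDerivAt (fun u : ℝ => Real.arcsin ((u - s)/d)) (1/w) t := by
    have hlt : ((t - s)/d)^2 < 1 := by
      rw [div_pow, div_lt_one (by positivity)]
      nlinarith
    have hne1 : (t - s)/d ≠ -1 := by intro h; rw [h] at hlt; norm_num at hlt
    have hne2 : (t - s)/d ≠ 1 := by intro h; rw [h] at hlt; norm_num at hlt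
    have hin : HasDerivAt (fun u : ℝ => (u - s)/d) (1/d) t := by
      simpa using ((hasDerivAt_id t).sub_const s).div_const d
    have := (Real.hasDerivAt_arcsin hne1 hne2).comp t hin
    refine this.congr_deriv (Eq.symm ?_)
    have h1m : 1 - ((t - s)/d)^2 = ((t-a)*(b-t))/d^2 := by
      rw [hadef, hbdef]; field_simp; ring
    rw [h1m, Real.sqrt_div hRt.le, Real.sqrt_sq hd.le]
    rw [← hwdef]
    field_simp
  -- piece 2 : log (u - x)
  have h2 : HasDerivAt (fun u : ℝ => Real.log (u - x)) (1/(t-x)) t := by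
    have hin : HasDerivAt (fun u : ℝ => u - x) 1 t := (hasDerivAt_id t).sub_const x
    exact ((Real.hasDerivAt_log htx').comp t hin).congr_deriv (by simp : (t - x)⁻¹ * 1 = 1/(t-x))
  -- positivity of N
  have hnum : 0 < (x - a)*(b - x) + (s-x)*(t-x) := by
    have e1 : 0 < b - t := by linarith
    have e2 : 0 < x - a := by linarith
    have e3 : 0 < t - a := by linarith
    have e4 : 0 < b - x := by linarith
    have hab2 : a + b = 2*s := by rw [hadef, hbdef]; ring
    nlinarith [mul_pos e1 e2, mul_pos e3 e4]
  have hN : 0 < (x - a)*(b - x) + (s-x)*(t-x) + r * w := by positivity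
  -- piece 3 : log N
  have hsq : HasDerivAt (fun u : ℝ => Real.sqrt ((u - a)*(b - u))) ((s-t)/w) t := by
    have hin : HasDerivAt (fun u : ℝ => (u - a)*(b - u)) (a + b - 2*t) t := by
      have := ((hasDerivAt_id t).sub_const a).mul ((hasDerivAt_const t b).sub (hasDerivAt_id t))
      refine this.congr_deriv (Eq.symm ?_)
      simp only [id_eq, Pi.sub_apply]; ring
    have := (Real.hasDerivAt_sqrt hRt.ne').comp t hin
    refine this.congr_deriv (Eq.symm ?_)
    rw [← hwdef]
    have hab2 : a + b = 2*s := by rw [hadef, hbdef]; ring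
    rw [hab2]
    field_simp
  have hNder : HasDerivAt (fun u : ℝ => (x - a)*(b - x) + (s-x)*(u-x) + r * Real.sqrt ((u - a)*(b - u)))
      ((s-x) + r * ((s-t)/w)) t := by
    have hlin : HasDerivAt (fun u : ℝ => (x - a)*(b - x) + (s-x)*(u-x)) (s-x) t := by
      exact (((hasDerivAt_id t).sub_const x).const_mul (s-x)).const_add ((x - a)*(b - x)) |>.congr_deriv (by rw [mul_one])
    exact hlin.add (hsq.const_mul r)
  have h3 : HasDerivAt (fun u : ℝ => Real.log ((x - a)*(b - x) + (s-x)*(u-x)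
      + r * Real.sqrt ((u - a)*(b - u))))
      (((s-x) + r * ((s-t)/w)) / ((x - a)*(b - x) + (s-x)*(t-x) + r * w)) t := by
    have := (Real.hasDerivAt_log hN.ne').comp t hNder
    exact this.congr_deriv (by simp [div_eq_inv_mul, ← hwdef])
  -- piece 4 : arcsin v
  have hid : (t*d)^2 - (s*t - q^2)^2 = q^2*((t-a)*(b-t)) := by
    rw [hadef, hbdef]
    linear_combination (t^2 - q^2) * hq2'
  have hq2Rt : 0 < q^2*((t-a)*(b-t)) := mul_pos (pow_pos hq0 2) hRt
  have hvlt : ((s*t - q^2)/(t*d))^2 < 1 := by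
    rw [div_pow, div_lt_one (by positivity)]
    linarith
  have h4 : HasDerivAt (fun u : ℝ => Real.arcsin ((s*u - q^2)/(u*d))) (q/(t*w)) t := by
    have hne1 : (s*t - q^2)/(t*d) ≠ -1 := by intro h; rw [h] at hvlt; norm_num at hvlt
    have hne2 : (s*t - q^2)/(t*d) ≠ 1 := by intro h; rw [h] at hvlt; norm_num at hvlt
    have hin : HasDerivAt (fun u : ℝ => (s*u - q^2)/(u*d)) (q^2/(t^2*d)) t := by
      have hf : HasDerivAt (fun u : ℝ => s*u - q^2) s t := by
        simpa using ((hasDerivAt_id t).const_mul s).sub_const (q^2)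
      have hg : HasDerivAt (fun u : ℝ => u*d) d t := by
        simpa using (hasDerivAt_id t).mul_const d
      have := hf.div hg (by positivity)
      refine this.congr_deriv (Eq.symm ?_)
      field_simp
      ring
    have := (Real.hasDerivAt_arcsin hne1 hne2).comp t hin
    refine this.congr_deriv (Eq.symm ?_)
    have hsv : Real.sqrt (1 - ((s*t - q^2)/(t*d))^2) = q*w/(t*d) := by
      have he : 1 - ((s*t - q^2)/(t*d))^2 = (q*w/(t*d))^2 := by
        rw [div_pow, div_pow, mul_pow q w, hw2]
        rw [eq_div_iff (by positivity), sub_mul, div_mul_cancel₀ _ (by positivity : ((t*d)^2 : ℝ) ≠ 0)]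
        linarith [hid]
      rw [he, Real.sqrt_sq (by positivity)]
    rw [hsv]
    field_simp
  -- combine
  have hsum : HasDerivAt (fun u : ℝ =>
      -x * Real.arcsin ((u - s)/d) + r * Real.log (u - x)
      - r * Real.log ((x - a)*(b - x) + (s-x)*(u-x) + r * Real.sqrt ((u - a)*(b - u)))
      + q * Real.arcsin ((s*u - q^2)/(u*d)))
      (-x * (1/w) + r * (1/(t-x))
        - r * (((s-x) + r * ((s-t)/w)) / ((x - a)*(b - x) + (s-x)*(t-x) + r * w))
        + q * (q/(t*w))) t :=
    (((h1.const_mul (-x)).add (h2.const_mul r)).sub (h3.const_mul r)).add (h4.const_mul q)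
  convert hsum using 1
  have hab2 : a + b = 2*s := by rw [hadef, hbdef]; ring
  have hNne : ((x - a)*(b - x) + (s-x)*(t-x) + r * w) ≠ 0 := hN.ne'
  have hpoly : r*w*((x - a)*(b - x) + (s-x)*(t-x) + r*w) - r*(t-x)*((s-x)*w + r*(s-t))
      = r^2*((x - a)*(b - x) + (s-x)*(t-x) + r*w) := by
    linear_combination (-(r*w)) * hr2 + (r^2) * hw2 + (r^2*(t-x)) * hab2
  have hpoly2 : x*t*(t-x) + x*w^2 = r^2*t + q^2*(t-x) := by
    linear_combination (-(t))*hr2 + (-(t-x))*hq2 + x*hw2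
  have hcross : r*(w - r) * ((x - a)*(b - x) + (s-x)*(t-x) + r*w)
      = r*(t-x)*((s-x)*w + r*(s-t)) := by
    linear_combination hpoly
  have key : r * (1/(t-x)) - r * ((s - x + r*((s-t)/w)) / ((x - a)*(b - x) + (s-x)*(t-x) + r*w))
      = r^2/((t-x)*w) := by
    have h5 : s - x + r*((s-t)/w) = ((s-x)*w + r*(s-t))/w := by
      field_simp
    have h6 : r * (1/(t-x)) - r^2/((t-x)*w) = (r*(w-r))/((t-x)*w) := by
      field_simp
    have h7 : (r*(w-r))/((t-x)*w)
        = r * (((s-x)*w + r*(s-t))/w / ((x - a)*(b - x) + (s-x)*(t-x) + r*w)) := by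
      rw [div_div, mul_div_assoc']
      rw [div_eq_div_iff (mul_ne_zero htx' hw.ne') (mul_ne_zero hw.ne' hNne)]
      linear_combination w * hcross
    rw [h5]
    linarith [h6, h7]
  have hB : x*w/(t*(t-x)) = -x*(1/w) + r^2/((t-x)*w) + q*(q/(t*w)) := by
    have hRHS : -x*(1/w) + r^2/((t-x)*w) + q*(q/(t*w))
        = (-(x*t*(t-x)) + r^2*t + q^2*(t-x)) / (t*(t-x)*w) := by
      field_simp
    rw [hRHS, div_eq_div_iff (mul_ne_zero ht0.ne' htx') (mul_ne_zero (mul_ne_zero ht0.ne' htx') hw.ne')]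
    linear_combination (t*(t-x)) * hpoly2
  linarith [key, hB]


lemma auxG_hasDerivAt (s d r q x t : ℝ)
    (hd : 0 < d) (ha0 : 0 < s - d) (hax : s - d < x) (hxb : x < s + d)
    (hr : r = Real.sqrt ((x - (s-d)) * ((s+d) - x)) )
    (hq0 : 0 < q) (hq2 : q^2 = (s-d)*(s+d))
    (hat : s - d < t) (htb : t < s + d) (htx : t ≠ x) :
    HasDerivAt (auxG s d r q x)
      (x * Real.sqrt ((t - (s-d))*((s+d) - t)) / (t * (t - x))) t := by
  have := aux_hasDerivAt s d r q x t hd ha0 hax hxb hr hq0 hq2 hat htb htx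
  exact this



set_option maxHeartbeats 1600000 in
/-- The Hilbert transform of the Marčenko–Pastur law: for `x ∈ (λ₋, λ₊)`,
the principal value integral `PV ∫ f_MP(t)/(t-x) dt` exists and equals
`(1 - c - x)/(2cx)`. -/
theorem hilbertTransform_marchenkoPastur
    (c x : ℝ) (hc0 : 0 < c) (hc1 : c < 1)
    (hx1 : (1 - Real.sqrt c) ^ 2 < x) (hx2 : x < (1 + Real.sqrt c) ^ 2) :
    Filter.Tendsto
      (fun ε : ℝ =>
        (∫ t in ((1 - Real.sqrt c) ^ 2)..(x - ε), fMP c t / (t - x)) +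
          ∫ t in (x + ε)..((1 + Real.sqrt c) ^ 2), fMP c t / (t - x))
      (nhdsWithin 0 (Set.Ioi 0))
      (nhds ((1 - c - x) / (2 * c * x))) := by
  have hsc2 : Real.sqrt c ^ 2 = c := Real.sq_sqrt hc0.le
  have hsc0 : 0 < Real.sqrt c := Real.sqrt_pos.2 hc0
  have hsc1 : Real.sqrt c < 1 := by nlinarith [hsc2]
  set s : ℝ := 1 + c with hsdef
  set d : ℝ := 2 * Real.sqrt c with hddef
  have hd : 0 < d := by positivity
  have hadef : (1 - Real.sqrt c) ^ 2 = s - d := by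
    rw [hsdef, hddef]; linear_combination hsc2
  have hbdef : (1 + Real.sqrt c) ^ 2 = s + d := by
    rw [hsdef, hddef]; linear_combination hsc2
  set q : ℝ := 1 - c with hqdef
  have hq0 : 0 < q := by rw [hqdef]; linarith
  have hq2 : q ^ 2 = (s - d) * (s + d) := by
    rw [hqdef, hsdef, hddef]; linear_combination (4 : ℝ) * hsc2
  have ha0 : 0 < s - d := by rw [← hadef]; nlinarith
  have hax : s - d < x := hadef ▸ hx1
  have hxb : x < s + d := hbdef ▸ hx2
  have hx0 : 0 < x := ha0.trans hax
  set r : ℝ := Real.sqrt ((x - (s - d)) * ((s + d) - x)) with hrdef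
  have hr0 : 0 < r := Real.sqrt_pos.2 (mul_pos (by linarith) (by linarith))
  have hC0 : (0:ℝ) < 2 * Real.pi * c * x := by positivity
  -- the FTC computations
  have key1 : ∀ y, s - d < y → y < x →
      (∫ t in (s - d)..y, fMP c t / (t - x))
        = (auxG s d r q x y - auxG s d r q x (s - d)) / (2 * Real.pi * c * x) := by
    intro y hy1 hy2
    have hle : s - d ≤ y := hy1.le
    have heq : Set.EqOn (fun t => fMP c t / (t - x))
        (fun t => x * Real.sqrt ((t - (s - d)) * ((s + d) - t)) / (t * (t - x)) / (2 * Real.pi * c * x))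
        (Set.uIcc (s - d) y) := by
      intro t ht
      rw [Set.uIcc_of_le hle] at ht
      obtain ⟨ht1, ht2⟩ := ht
      rcases eq_or_lt_of_le ht1 with hta | hta
      · simp only [fMP, ← hta, hadef]
        rw [if_neg (by simp)]
        simp
      · have htb' : t < s + d := by linarith
        have ht0 : 0 < t := ha0.trans hta
        have htx : t - x ≠ 0 := by intro h; nlinarith
        simp only [fMP, hadef, hbdef]
        rw [if_pos ⟨hta, htb'⟩]
        field_simp
    rw [intervalIntegral.integral_congr heq]
    have hsub : Set.Icc (s - d) y ⊆ {u : ℝ | ((s - d) ≤ u ∧ u ≤ s + d) ∧ u ≠ x} := by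
      intro u ⟨h1, h2⟩
      exact ⟨⟨h1, by linarith⟩, by intro h; rw [h] at h2; linarith⟩
    have hcont : ContinuousOn (fun u => auxG s d r q x u / (2 * Real.pi * c * x)) (Set.Icc (s - d) y) :=
      ((auxG_contOn s d r q x hd ha0 hax hxb hr0.le).mono hsub).div_const _
    have hderiv : ∀ t ∈ Set.Ioo (s - d) y,
        HasDerivWithinAt (fun u => auxG s d r q x u / (2 * Real.pi * c * x))
          (x * Real.sqrt ((t - (s - d)) * ((s + d) - t)) / (t * (t - x)) / (2 * Real.pi * c * x))
          (Set.Ioi t) t := by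
      intro t ⟨h1, h2⟩
      exact ((auxG_hasDerivAt s d r q x t hd ha0 hax hxb hrdef hq0 hq2 h1 (by linarith)
        (by intro h; rw [h] at h2; linarith)).div_const _).hasDerivWithinAt
    have hint : IntervalIntegrable
        (fun t => x * Real.sqrt ((t - (s - d)) * ((s + d) - t)) / (t * (t - x)) / (2 * Real.pi * c * x))
        MeasureTheory.volume (s - d) y := by
      apply ContinuousOn.intervalIntegrable
      apply ContinuousOn.div_const
      apply ContinuousOn.div
      · exact (continuous_const.mul (Real.continuous_sqrt.comp (by continuity))).continuousOn
      · exact (continuous_id.mul (continuous_id.sub continuous_const)).continuousOn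
      · rw [Set.uIcc_of_le hle]
        intro u ⟨h1, h2⟩
        have hu0 : 0 < u := by linarith
        have : u - x ≠ 0 := by intro h; nlinarith
        exact mul_ne_zero hu0.ne' this
    rw [intervalIntegral.integral_eq_sub_of_hasDeriv_right_of_le hle hcont hderiv hint,
      div_sub_div_same]
  have key2 : ∀ z, x < z → z < s + d →
      (∫ t in z..(s + d), fMP c t / (t - x))
        = (auxG s d r q x (s + d) - auxG s d r q x z) / (2 * Real.pi * c * x) := by
    intro z hz1 hz2
    have hle : z ≤ s + d := hz2.le
    have heq : Set.EqOn (fun t => fMP c t / (t - x))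
        (fun t => x * Real.sqrt ((t - (s - d)) * ((s + d) - t)) / (t * (t - x)) / (2 * Real.pi * c * x))
        (Set.uIcc z (s + d)) := by
      intro t ht
      rw [Set.uIcc_of_le hle] at ht
      obtain ⟨ht1, ht2⟩ := ht
      rcases eq_or_lt_of_le ht2 with htb | htb
      · simp only [fMP, htb, hadef, hbdef]
        rw [if_neg (by simp)]
        simp
      · have hta : s - d < t := by linarith
        have ht0 : 0 < t := ha0.trans hta
        have htx : t - x ≠ 0 := by intro h; nlinarith
        simp only [fMP, hadef, hbdef]
        rw [if_pos ⟨hta, htb⟩]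
        field_simp
    rw [intervalIntegral.integral_congr heq]
    have hsub : Set.Icc z (s + d) ⊆ {u : ℝ | ((s - d) ≤ u ∧ u ≤ s + d) ∧ u ≠ x} := by
      intro u ⟨h1, h2⟩
      exact ⟨⟨by linarith, h2⟩, by intro h; rw [h] at h1; linarith⟩
    have hcont : ContinuousOn (fun u => auxG s d r q x u / (2 * Real.pi * c * x)) (Set.Icc z (s + d)) :=
      ((auxG_contOn s d r q x hd ha0 hax hxb hr0.le).mono hsub).div_const _
    have hderiv : ∀ t ∈ Set.Ioo z (s + d),
        HasDerivWithinAt (fun u => auxG s d r q x u / (2 * Real.pi * c * x))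
          (x * Real.sqrt ((t - (s - d)) * ((s + d) - t)) / (t * (t - x)) / (2 * Real.pi * c * x))
          (Set.Ioi t) t := by
      intro t ⟨h1, h2⟩
      exact ((auxG_hasDerivAt s d r q x t hd ha0 hax hxb hrdef hq0 hq2 (by linarith) h2
        (by intro h; rw [h] at h1; linarith)).div_const _).hasDerivWithinAt
    have hint : IntervalIntegrable
        (fun t => x * Real.sqrt ((t - (s - d)) * ((s + d) - t)) / (t * (t - x)) / (2 * Real.pi * c * x))
        MeasureTheory.volume z (s + d) := by
      apply ContinuousOn.intervalIntegrable
      apply ContinuousOn.div_const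
      apply ContinuousOn.div
      · exact (continuous_const.mul (Real.continuous_sqrt.comp (by continuity))).continuousOn
      · exact (continuous_id.mul (continuous_id.sub continuous_const)).continuousOn
      · rw [Set.uIcc_of_le hle]
        intro u ⟨h1, h2⟩
        have hu0 : 0 < u := by linarith [ha0, hax, hz1]
        have : u - x ≠ 0 := by intro h; nlinarith
        exact mul_ne_zero hu0.ne' this
    rw [intervalIntegral.integral_eq_sub_of_hasDeriv_right_of_le hle hcont hderiv hint,
      div_sub_div_same]
  -- eventual equality
  have hδ : 0 < min (x - (s - d)) ((s + d) - x) := lt_min (by linarith) (by linarith)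
  have hev : (fun ε : ℝ =>
        (∫ t in ((1 - Real.sqrt c) ^ 2)..(x - ε), fMP c t / (t - x)) +
          ∫ t in (x + ε)..((1 + Real.sqrt c) ^ 2), fMP c t / (t - x))
      =ᶠ[nhdsWithin 0 (Set.Ioi 0)]
      (fun ε : ℝ => (auxG s d r q x (x - ε) - auxG s d r q x (x + ε)
        + (auxG s d r q x (s + d) - auxG s d r q x (s - d))) / (2 * Real.pi * c * x)) := by
    filter_upwards [Ioo_mem_nhdsGT hδ] with ε hε
    obtain ⟨hε0, hεlt⟩ := hε
    have hεa : s - d < x - ε := by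
      have := lt_of_lt_of_le hεlt (min_le_left _ _); linarith
    have hεb : x + ε < s + d := by
      have := lt_of_lt_of_le hεlt (min_le_right _ _); linarith
    rw [hadef, hbdef, key1 (x - ε) hεa (by linarith), key2 (x + ε) (by linarith) hεb]
    field_simp
    ring
  -- the limit of the RHS
  have hA : ContinuousAt (fun u : ℝ => -x * Real.arcsin ((u - s)/d)
      - r * Real.log ((x - (s-d))*((s+d) - x) + (s-x)*(u-x)
          + r * Real.sqrt ((u - (s-d))*((s+d) - u)))
      + q * Real.arcsin ((s*u - q^2)/(u*d))) x := by
    have hNx : ((x - (s-d))*((s+d) - x) + (s-x)*(x-x)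
        + r * Real.sqrt ((x - (s-d))*((s+d) - x))) ≠ 0 :=
      (auxN_pos s d r q x x hd ha0 hax hxb hr0.le hax.le hxb.le).ne'
    apply ContinuousAt.add
    apply ContinuousAt.sub
    · exact (continuous_const.mul (Real.continuous_arcsin.comp (by continuity))).continuousAt
    · apply ContinuousAt.mul continuousAt_const
      exact ContinuousAt.log (Continuous.continuousAt (by continuity)) hNx
    · apply ContinuousAt.mul continuousAt_const
      apply Real.continuous_arcsin.continuousAt.comp
      exact ContinuousAt.div (by fun_prop) (by fun_prop) (mul_ne_zero hx0.ne' hd.ne')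
  have hdelta : Filter.Tendsto (fun ε : ℝ => auxG s d r q x (x - ε) - auxG s d r q x (x + ε))
      (nhdsWithin 0 (Set.Ioi 0)) (nhds 0) := by
    have t1 : Filter.Tendsto (fun ε : ℝ => x - ε) (nhds 0) (nhds x) := by
      simpa using (tendsto_const_nhds (x := x)).sub (Filter.tendsto_id (x := nhds (0:ℝ)))
    have t2 : Filter.Tendsto (fun ε : ℝ => x + ε) (nhds 0) (nhds x) := by
      simpa using (tendsto_const_nhds (x := x)).add (Filter.tendsto_id (x := nhds (0:ℝ)))
    have h1 := ((hA.tendsto.comp t1).sub (hA.tendsto.comp t2))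
    rw [sub_self] at h1
    apply Filter.Tendsto.congr' ?_ (h1.mono_left nhdsWithin_le_nhds)
    filter_upwards [self_mem_nhdsWithin] with ε (hε : ε > 0)
    simp only [Function.comp, auxG]
    rw [show x - ε - x = -ε by ring, show x + ε - x = ε by ring, Real.log_neg_eq_log]
    ring
  have hfinal : Filter.Tendsto
      (fun ε : ℝ => (auxG s d r q x (x - ε) - auxG s d r q x (x + ε)
        + (auxG s d r q x (s + d) - auxG s d r q x (s - d))) / (2 * Real.pi * c * x))
      (nhdsWithin 0 (Set.Ioi 0)) (nhds ((1 - c - x) / (2 * c * x))) := by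
    have h2 := (hdelta.add_const (auxG s d r q x (s + d) - auxG s d r q x (s - d))).div_const
      (2 * Real.pi * c * x)
    convert h2 using 2
    rw [auxG_at_a s d r q x hd ha0 hax hxb hr0.le hq0 hq2,
      auxG_at_b s d r q x hd ha0 hax hxb hr0.le hq0 hq2]
    rw [hqdef]
    field_simp
    ring
  exact Filter.Tendsto.congr' hev.symm hfinal
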